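/- Let f ∈ ℤ[x] be monic and quadratic, and assume f is not the square of a polynomial in ℚ[x]. Let γ ∈ ℚ be the critical point of f and set m = f(γ) − γ ∈ ℚ, so that f = (x − γ)² + γ + m. If |m| > 6 + 3·√(|γ| + 1), then for every n ≥ 3, f^n(γ) is not the square of a rational number. Moreover, if γ ∈ ℤ, then the same conclusion holds under the weaker hypothesis |m| > 1 + √(|γ| + 1). -/

import Mathlib

open Polynomial

/-- The `n`-th iterate of a polynomial, with `f^0 = X`. -/
noncomputable def polyIter {R : Type*} [CommRing R] (f : Polynomial R) : ℕ → Polynomial R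
  | 0 => X
  | n + 1 => f.comp (polyIter f n)

lemma sq_rat_int (q : ℚ) (z : ℤ) (h : q ^ 2 = (z : ℚ)) : ∃ u : ℤ, (u : ℚ) = q := by
  have hint : IsIntegral ℤ q := by
    refine ⟨X ^ 2 - C z, monic_X_pow_sub_C z (by norm_num), ?_⟩
    rw [eval₂_sub, eval₂_pow, eval₂_X, eval₂_C, h]
    simp
  exact IsIntegrallyClosed.isIntegral_iff.mp hint

lemma odd_sq_gap (u e : ℤ) (hu : Odd u) (he : Odd e) (hne : u ^ 2 ≠ e ^ 2) :
    2 * |e| + 2 ≤ |u ^ 2 - e ^ 2| := by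
  obtain ⟨a, ha⟩ := odd_abs.mpr hu
  obtain ⟨b, hb⟩ := odd_abs.mpr he
  have hu1 : 1 ≤ |u| := by have := abs_nonneg u; omega
  have he1 : 1 ≤ |e| := by have := abs_nonneg e; omega
  have hune : |u| ≠ |e| := by
    intro hh
    apply hne
    rw [← sq_abs u, ← sq_abs e, hh]
  have hsq : |u ^ 2 - e ^ 2| = abs (|u| ^ 2 - |e| ^ 2) := by rw [sq_abs, sq_abs]
  rw [hsq]
  rcases lt_or_gt_of_ne hune with hlt | hgt
  · have h2 : |u| + 2 ≤ |e| := by omega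
    have h3 : 2 * |e| + 2 ≤ |e| ^ 2 - |u| ^ 2 := by nlinarith
    calc 2 * |e| + 2 ≤ |e| ^ 2 - |u| ^ 2 := h3
      _ ≤ abs (|e| ^ 2 - |u| ^ 2) := le_abs_self _
      _ = abs (|u| ^ 2 - |e| ^ 2) := abs_sub_comm _ _
  · have h2 : |e| + 2 ≤ |u| := by omega
    have h3 : 2 * |e| + 2 ≤ |u| ^ 2 - |e| ^ 2 := by nlinarith
    exact h3.trans (le_abs_self _)

lemma int_sq_gap (u D M : ℤ) (h : u ^ 2 = D ^ 2 + M) (hM : M ≠ 0) (hlt : |M| < |D|) : False := by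
  have hne : |u| ≠ |D| := by
    intro hh
    apply hM
    have : u ^ 2 = D ^ 2 := by rw [← sq_abs u, ← sq_abs D, hh]
    omega
  have hM' : |M| = abs (|u| ^ 2 - |D| ^ 2) := by
    rw [sq_abs, sq_abs]; congr 1; omega
  rcases lt_or_gt_of_ne hne with hlt2 | hgt
  · have h1 : |u| + 1 ≤ |D| := by omega
    have h0 : 0 ≤ |u| := abs_nonneg u
    have h3 : |D| ≤ |D| ^ 2 - |u| ^ 2 := by nlinarith
    have h4 : |D| ≤ |M| := by
      rw [hM']
      calc |D| ≤ |D| ^ 2 - |u| ^ 2 := h3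
        _ ≤ abs (|D| ^ 2 - |u| ^ 2) := le_abs_self _
        _ = abs (|u| ^ 2 - |D| ^ 2) := abs_sub_comm _ _
    omega
  · have h1 : |D| + 1 ≤ |u| := by omega
    have h0 : 0 ≤ |D| := abs_nonneg D
    have h3 : |D| ≤ |u| ^ 2 - |D| ^ 2 := by nlinarith
    have h4 : |D| ≤ |M| := by
      rw [hM']
      exact h3.trans (le_abs_self _)
    omega

lemma quad_shape (f : Polynomial ℤ) (hf : f.Monic) (hdeg : f.natDegree = 2) :
    f = X ^ 2 + C (f.coeff 1) * X + C (f.coeff 0) := by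
  have h2 : f.coeff 2 = 1 := by
    have := hf.coeff_natDegree
    rwa [hdeg] at this
  have hcc : ∀ (z : ℤ) (i : ℕ), ((z : ℤ[X])).coeff i = if i = 0 then z else 0 := by
    intro z i; rw [← C_eq_intCast]; exact coeff_C
  ext k
  match k with
  | 0 => simp [coeff_X_pow, hcc]
  | 1 => simp [coeff_X_pow, hcc]
  | 2 => simp [coeff_X_pow, hcc, h2]
  | (k+3) =>
    have hz : f.coeff (k+3) = 0 := coeff_eq_zero_of_natDegree_lt (by omega)
    simp [coeff_X_pow, hcc, hz]

lemma quad_eval (f : Polynomial ℤ) (hf : f.Monic) (hdeg : f.natDegree = 2) (x : ℚ) :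
    Polynomial.aeval x f = x ^ 2 + (f.coeff 1 : ℚ) * x + (f.coeff 0 : ℚ) := by
  conv_lhs => rw [quad_shape f hf hdeg]
  simp

/-- base inequality for |m^2 + m| -/
lemma base_abs (m : ℚ) : m ^ 2 - |m| ≤ |m ^ 2 + m| := by
  have h1 : |m ^ 2| ≤ |m ^ 2 + m| + |m| := by
    calc |m ^ 2| = |(m ^ 2 + m) + (-m)| := by ring_nf
      _ ≤ |m ^ 2 + m| + |(-m)| := abs_add_le _ _
      _ = |m ^ 2 + m| + |m| := by rw [abs_neg]
  have h2 : |m ^ 2| = m ^ 2 := abs_of_nonneg (sq_nonneg m)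
  linarith

lemma sqadd_abs (x m : ℚ) : x ^ 2 - |m| ≤ |x ^ 2 + m| := by
  have h1 : |x ^ 2| ≤ |x ^ 2 + m| + |m| := by
    calc |x ^ 2| = |(x ^ 2 + m) + (-m)| := by ring_nf
      _ ≤ |x ^ 2 + m| + |(-m)| := abs_add_le _ _
      _ = |x ^ 2 + m| + |m| := by rw [abs_neg]
  have h2 : |x ^ 2| = x ^ 2 := abs_of_nonneg (sq_nonneg x)
  linarith

lemma growA (m : ℚ) (hm2 : 2 < |m|) (d : ℕ → ℚ) (hd0 : d 0 = 0)
    (hds : ∀ k, d (k+1) = d k ^ 2 + m) :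
    ∀ k, 2 ≤ k → m ^ 2 - |m| ≤ |d k| := by
  intro k hk
  induction k, hk using Nat.le_induction with
  | base =>
    have h1 : d 1 = m := by rw [hds, hd0]; ring
    have h2 : d 2 = m ^ 2 + m := by rw [hds, h1]
    rw [h2]; exact base_abs m
  | succ k hk ih =>
    have e0 : |m| ^ 2 = m ^ 2 := sq_abs m
    have hmn : (0:ℚ) ≤ |m| := abs_nonneg m
    have e2 : |m| ≤ m ^ 2 - |m| := by nlinarith
    have hsq : (m ^ 2 - |m|) ^ 2 ≤ d k ^ 2 := by
      have := sq_abs (d k)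
      nlinarith
    have e3 : m ^ 2 ≤ (m ^ 2 - |m|) ^ 2 := by nlinarith
    have h1 : d k ^ 2 - |m| ≤ |d k ^ 2 + m| := sqadd_abs _ _
    rw [hds]
    linarith

lemma growB (m : ℚ) (hm9 : 9 < |m|) (d : ℕ → ℚ) (hd0 : d 0 = 0)
    (hds : ∀ k, d (k+1) = d k ^ 2 + m) :
    ∀ k, 2 ≤ k → (m ^ 2 - |m|) / 16 * 2 ^ (2 ^ k) ≤ |d k| := by
  intro k hk
  induction k, hk using Nat.le_induction with
  | base =>
    have h1 : d 1 = m := by rw [hds, hd0]; ring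
    have h2 : d 2 = m ^ 2 + m := by rw [hds, h1]
    have h16 : ((2:ℚ)) ^ (2 ^ 2 : ℕ) = 16 := by norm_num
    rw [h2, h16]
    have := base_abs m
    linarith
  | succ k hk ih =>
    set W : ℚ := (m ^ 2 - |m|) / 16 with hW
    have e0 : |m| ^ 2 = m ^ 2 := sq_abs m
    have hm0 : (0:ℚ) ≤ |m| := abs_nonneg m
    have hW4 : 4 < W := by rw [hW]; nlinarith
    have hP : (0:ℚ) < 2 ^ (2 ^ k) := by positivity
    have hPP : ((2:ℚ) ^ (2 ^ k)) ^ 2 = 2 ^ (2 ^ (k+1)) := by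
      rw [← pow_mul, pow_succ]
    have h256 : (256:ℚ) ≤ 2 ^ (2 ^ (k+1)) := by
      have h8 : 8 ≤ 2 ^ (k + 1) := by
        calc 8 = 2 ^ 3 := by norm_num
        _ ≤ 2 ^ (k+1) := Nat.pow_le_pow_right (by norm_num) (by omega)
      calc (256:ℚ) = 2 ^ 8 := by norm_num
        _ ≤ 2 ^ (2 ^ (k+1)) := pow_le_pow_right₀ (by norm_num) h8
    have hsq : (W * 2 ^ (2 ^ k)) ^ 2 ≤ d k ^ 2 := by
      have h0 : 0 ≤ W * 2 ^ (2 ^ k) := by positivity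
      have := sq_abs (d k)
      nlinarith
    have h1 : d k ^ 2 - |m| ≤ |d k ^ 2 + m| := sqadd_abs _ _
    rw [hds]
    have hWm : |m| ≤ 16 * W := by rw [hW]; nlinarith
    have hW2 : 16 * W ≤ (W ^ 2 - W) * 256 := by nlinarith
    have hWW : (W ^ 2 - W) * 256 ≤ (W ^ 2 - W) * 2 ^ (2 ^ (k+1)) := by
      apply mul_le_mul_of_nonneg_left h256
      nlinarith
    have hkey : W * 2 ^ (2 ^ (k+1)) + |m| ≤ W ^ 2 * 2 ^ (2 ^ (k+1)) := by nlinarith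
    have hdk2 : (W * 2 ^ (2 ^ k)) ^ 2 = W ^ 2 * 2 ^ (2 ^ (k+1)) := by
      rw [mul_pow, hPP]
    nlinarith

lemma final_ineq (γ m : ℚ) (hm9 : 9 < |m|) (hsqB : 9 * (|γ| + 1) < (|m| - 6) ^ 2) :
    8 * (|γ| + |m|) < m ^ 2 - |m| := by
  nlinarith [sq_abs m, sq_nonneg (|m| - 9), hm9, hsqB, abs_nonneg γ, abs_nonneg m]

lemma final_contra (γ m μ W : ℚ) (hμabs : |μ| ≤ |γ| + |m|) (h8W : 8 * W < 4 * |μ|)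
    (hW16 : 16 * W = m ^ 2 - |m|) (hlast : 8 * (|γ| + |m|) < m ^ 2 - |m|) : False := by
  linarith

theorem critical_orbit_not_square
    (f : Polynomial ℤ) (hf : f.Monic) (hdeg : f.natDegree = 2)
    (hnsq : ¬∃ h : Polynomial ℚ, f.map (Int.castRingHom ℚ) = h ^ 2)
    (γ m : ℚ) (hγ : γ = -(f.coeff 1 : ℚ) / 2)
    (hm : m = Polynomial.aeval γ f - γ)
    (hbound : ((|m| : ℚ) : ℝ) > 6 + 3 * Real.sqrt (|γ| + 1) ∨
      ((∃ z : ℤ, (z : ℚ) = γ) ∧ ((|m| : ℚ) : ℝ) > 1 + Real.sqrt (|γ| + 1)))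
    (n : ℕ) (hn : 3 ≤ n) :
    ¬∃ q : ℚ, q ^ 2 = (fun x : ℚ => Polynomial.aeval x f)^[n] γ := by
  rintro ⟨q, hq⟩
  have heval : ∀ x : ℚ, Polynomial.aeval x f = x ^ 2 + (f.coeff 1 : ℚ) * x + (f.coeff 0 : ℚ) :=
    quad_eval f hf hdeg
  set b1 : ℤ := f.coeff 1 with hb1
  set b0 : ℤ := f.coeff 0 with hb0
  have hB : (b1 : ℚ) = -2 * γ := by rw [hγ]; ring
  set μ : ℚ := γ + m with hμ
  have hμeval : μ = γ ^ 2 + (b1 : ℚ) * γ + (b0 : ℚ) := by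
    rw [hμ, hm, heval γ]; ring
  have hb0μ : (b0 : ℚ) = μ + γ ^ 2 := by
    rw [hμeval, hB]; ring
  -- the orbit
  set d : ℕ → ℚ := fun k => (fun t : ℚ => t ^ 2 + m)^[k] 0 with hd
  have hd0 : d 0 = 0 := rfl
  have hds : ∀ k, d (k+1) = d k ^ 2 + m := fun k =>
    Function.iterate_succ_apply' (fun t : ℚ => t ^ 2 + m) k 0
  have hiter : ∀ k, (fun x : ℚ => Polynomial.aeval x f)^[k] γ = γ + d k := by
    intro k
    induction k with
    | zero => simp [hd0]
    | succ k ih =>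
      rw [Function.iterate_succ_apply', ih, hds]
      show Polynomial.aeval (γ + d k) f = _
      rw [heval, hB, hb0μ, hμ]
      ring
  -- μ ≠ 0
  have hμ0 : μ ≠ 0 := by
    intro h0
    apply hnsq
    refine ⟨X - C γ, ?_⟩
    have hmap : f.map (Int.castRingHom ℚ) =
        X ^ 2 + C ((b1 : ℤ) : ℚ) * X + C ((b0 : ℤ) : ℚ) := by
      conv_lhs => rw [quad_shape f hf hdeg]
      simp [Polynomial.map_add, Polynomial.map_mul, Polynomial.map_pow]
      rfl
    rw [hmap]
    have hb0' : ((b0 : ℤ) : ℚ) = γ ^ 2 := by rw [hb0μ, h0]; ring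
    rw [hb0', hB]
    have e1 : (C (-2 * γ) : ℚ[X]) = -C γ + -C γ := by
      rw [show (-2 * γ) = (-γ) + (-γ) by ring, C_add, C_neg]
    have e2 : (C (γ ^ 2) : ℚ[X]) = C γ ^ 2 := by
      rw [C_pow]
    rw [e1, e2]
    ring
  -- n = j + 1
  set j : ℕ := n - 1 with hj
  have hj2 : 2 ≤ j := by omega
  have hnj : n = j + 1 := by omega
  have hqdj : q ^ 2 = d j ^ 2 + μ := by
    rw [hq, hiter, hnj, hds, hμ]; ring
  -- case split on parity of b1
  rcases Int.even_or_odd b1 with hev | hodd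
  · -- integer case
    have hboundA : ((|m| : ℚ) : ℝ) > 1 + Real.sqrt (|γ| + 1) := by
      rcases hbound with h | ⟨_, h⟩
      · have hs : (0:ℝ) ≤ Real.sqrt (|γ| + 1) := Real.sqrt_nonneg _
        linarith
      · exact h
    have hs1 : (1:ℝ) ≤ Real.sqrt ((|γ| : ℚ) + 1) := by
      have h0 : (0:ℝ) ≤ ((|γ| : ℚ) : ℝ) := by positivity
      have h := Real.sqrt_le_sqrt (show (1:ℝ) ≤ ((|γ| : ℚ) : ℝ) + 1 by linarith)
      rwa [Real.sqrt_one] at h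
    have hm2R : (2:ℝ) < ((|m| : ℚ) : ℝ) := by linarith
    have hm2 : (2:ℚ) < |m| := by exact_mod_cast hm2R
    have hsqA : (|γ| : ℚ) + 1 < (|m| - 1) ^ 2 := by
      have h1 : Real.sqrt ((|γ| : ℚ) + 1) < ((|m| : ℚ) : ℝ) - 1 := by linarith
      have h2 : (0:ℝ) ≤ ((|γ| : ℚ) : ℝ) + 1 := by positivity
      have h3 : ((|γ| : ℚ) : ℝ) + 1 < (((|m| : ℚ) : ℝ) - 1) ^ 2 := by
        have h4 := Real.sq_sqrt h2
        nlinarith [Real.sqrt_nonneg (((|γ| : ℚ) : ℝ) + 1)]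
      exact_mod_cast h3
    -- integer data
    obtain ⟨t, ht⟩ := hev
    have hγG : γ = ((-t : ℤ) : ℚ) := by
      rw [hγ, ht]; push_cast; ring
    have hMμ : (((-t) ^ 2 + b1 * (-t) + b0 : ℤ) : ℚ) = μ := by
      rw [hμeval, hγG]; push_cast; ring
    set Mμ : ℤ := (-t) ^ 2 + b1 * (-t) + b0 with hMμdef
    set Mm : ℤ := Mμ - (-t) with hMmdef
    have hMm : ((Mm : ℤ) : ℚ) = m := by
      have hmm : m = μ - γ := by rw [hμ]; ring
      rw [hmm, hMmdef, hγG, ← hMμ]; push_cast; ring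
    set D : ℕ → ℤ := fun k => (fun s : ℤ => s ^ 2 + Mm)^[k] 0 with hD
    have hD0 : D 0 = 0 := rfl
    have hDs : ∀ k, D (k+1) = D k ^ 2 + Mm := fun k =>
      Function.iterate_succ_apply' (fun s : ℤ => s ^ 2 + Mm) k 0
    have hDd : ∀ k, ((D k : ℤ) : ℚ) = d k := by
      intro k
      induction k with
      | zero => rw [hD0, hd0]; norm_num
      | succ k ih => rw [hDs, hds, ← ih, ← hMm]; push_cast; ring
    -- q^2 is an integer
    have hqz : q ^ 2 = ((D j ^ 2 + Mμ : ℤ) : ℚ) := by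
      rw [hqdj, ← hDd, ← hMμ]; push_cast; ring
    obtain ⟨u, hu⟩ := sq_rat_int q _ hqz
    have huz : u ^ 2 = D j ^ 2 + Mμ := by
      have h5 : ((u : ℤ) : ℚ) ^ 2 = ((D j ^ 2 + Mμ : ℤ) : ℚ) := by rw [hu, hqz]
      exact_mod_cast h5
    -- size bounds
    have hgrow := growA m hm2 d hd0 hds j hj2
    have hμabs : |μ| ≤ |γ| + |m| := by rw [hμ]; exact abs_add_le _ _
    have hkey : |μ| < |d j| := by
      have h6 : |γ| + |m| < m ^ 2 - |m| := by nlinarith [sq_abs m, abs_nonneg γ, abs_nonneg m]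
      linarith
    have hMμne : Mμ ≠ 0 := by
      intro h0
      apply hμ0
      rw [← hMμ, h0]; norm_num
    have hlt : |Mμ| < |D j| := by
      have hc : |((Mμ : ℤ) : ℚ)| < |((D j : ℤ) : ℚ)| := by
        rw [hMμ, hDd]; exact hkey
      exact_mod_cast hc
    exact int_sq_gap u (D j) Mμ huz hMμne hlt
  · -- half-integer case
    have hboundB : ((|m| : ℚ) : ℝ) > 6 + 3 * Real.sqrt (|γ| + 1) := by
      rcases hbound with h | ⟨⟨z, hz⟩, _⟩
      · exact h
      · exfalso
        have h2z : ((2 * z : ℤ) : ℚ) = ((-b1 : ℤ) : ℚ) := by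
          push_cast
          rw [hz, hγ]; ring
        have h2z' : (2 * z : ℤ) = -b1 := by exact_mod_cast h2z
        obtain ⟨s, hs⟩ := hodd
        omega
    have hs1 : (1:ℝ) ≤ Real.sqrt ((|γ| : ℚ) + 1) := by
      have h0 : (0:ℝ) ≤ ((|γ| : ℚ) : ℝ) := by positivity
      have h := Real.sqrt_le_sqrt (show (1:ℝ) ≤ ((|γ| : ℚ) : ℝ) + 1 by linarith)
      rwa [Real.sqrt_one] at h
    have hm9R : (9:ℝ) < ((|m| : ℚ) : ℝ) := by linarith
    have hm9 : (9:ℚ) < |m| := by exact_mod_cast hm9R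
    have hsqB : 9 * ((|γ| : ℚ) + 1) < (|m| - 6) ^ 2 := by
      have h1 : 3 * Real.sqrt ((|γ| : ℚ) + 1) < ((|m| : ℚ) : ℝ) - 6 := by linarith
      have h2 : (0:ℝ) ≤ ((|γ| : ℚ) : ℝ) + 1 := by positivity
      have h3 : 9 * (((|γ| : ℚ) : ℝ) + 1) < (((|m| : ℚ) : ℝ) - 6) ^ 2 := by
        have h4 := Real.sq_sqrt h2
        nlinarith [Real.sqrt_nonneg (((|γ| : ℚ) : ℝ) + 1)]
      exact_mod_cast h3
    -- integer data
    have hMμ : ((4 * b0 - b1 ^ 2 : ℤ) : ℚ) = 4 * μ := by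
      rw [hμeval, hγ]; push_cast; ring
    set Mμ : ℤ := 4 * b0 - b1 ^ 2 with hMμdef
    set Mm : ℤ := Mμ + 2 * b1 with hMmdef
    have hMm : ((Mm : ℤ) : ℚ) = 4 * m := by
      have hmm : m = μ - γ := by rw [hμ]; ring
      rw [hMmdef]; push_cast
      rw [hMμ, hB, hμ]; ring
    obtain ⟨t, ht⟩ := hodd
    have hMμodd : Odd Mμ := ⟨2 * b0 - 2 * t ^ 2 - 2 * t - 1, by rw [hMμdef, ht]; ring⟩
    have hMmodd : Odd Mm := ⟨2 * b0 - 2 * t ^ 2, by rw [hMmdef, hMμdef, ht]; ring⟩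
    -- the integer sequence E
    set E : ℕ → ℤ := fun k =>
      Nat.rec (motive := fun _ => ℤ) 0 (fun k Ek => Ek ^ 2 + Mm * 2 ^ (2 ^ (k+1) - 2)) k with hE
    have hE0 : E 0 = 0 := rfl
    have hEs : ∀ k, E (k+1) = E k ^ 2 + Mm * 2 ^ (2 ^ (k+1) - 2) := fun k => rfl
    have hm4 : m = ((Mm : ℤ) : ℚ) / 4 := by rw [hMm]; ring
    have hcast : ∀ k, d k = ((E k : ℤ) : ℚ) / 2 ^ (2 ^ k) := by
      intro k
      induction k with
      | zero => rw [hE0, hd0]; norm_num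
      | succ k ih =>
        have ha2 : 2 ≤ 2 ^ (k+1) := by
          calc 2 = 2 ^ 1 := by norm_num
          _ ≤ 2 ^ (k+1) := Nat.pow_le_pow_right (by norm_num) (by omega)
        have h4 : (2:ℚ) ^ (2 ^ (k+1)) = 2 ^ (2 ^ (k+1) - 2) * 4 := by
          have he : 2 ^ (k+1) - 2 + 2 = 2 ^ (k+1) := by omega
          calc (2:ℚ) ^ (2 ^ (k+1)) = 2 ^ (2 ^ (k+1) - 2 + 2) := by rw [he]
            _ = 2 ^ (2 ^ (k+1) - 2) * 2 ^ 2 := pow_add 2 _ 2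
            _ = 2 ^ (2 ^ (k+1) - 2) * 4 := by norm_num
        have hPP : ((2:ℚ) ^ (2 ^ k)) ^ 2 = 2 ^ (2 ^ (k+1)) := by
          rw [← pow_mul, pow_succ]
        rw [hds, ih, hEs, hm4]
        push_cast
        rw [div_pow, hPP]
        field_simp
        rw [h4]
        ring
    have hEodd : ∀ k, 1 ≤ k → Odd (E k) := by
      intro k hk
      induction k, hk using Nat.le_induction with
      | base =>
        have h7 := hEs 0
        rw [hE0] at h7
        norm_num at h7
        rw [h7]; exact hMmodd
      | succ k hk ih =>
        rw [hEs]
        have hexp : 2 ^ (k+1) - 2 ≠ 0 := by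
          have h8 : 4 ≤ 2 ^ (k+1) := by
            calc 4 = 2 ^ 2 := by norm_num
            _ ≤ 2 ^ (k+1) := Nat.pow_le_pow_right (by norm_num) (by omega)
          omega
        obtain ⟨c, hc⟩ := Nat.exists_eq_succ_of_ne_zero hexp
        have heven : Even (Mm * 2 ^ (2 ^ (k+1) - 2)) := by
          refine ⟨Mm * 2 ^ c, ?_⟩
          rw [hc, pow_succ]
          ring
        exact (ih.pow (n := 2)).add_even heven
    -- assemble
    have hP : (0:ℚ) < 2 ^ (2 ^ j) := by positivity
    have hPP : ((2:ℚ) ^ (2 ^ j)) ^ 2 = 2 ^ (2 ^ n) := by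
      rw [← pow_mul, hnj, pow_succ]
    have hexp2 : 8 ≤ 2 ^ n := by
      calc 8 = 2 ^ 3 := by norm_num
      _ ≤ 2 ^ n := Nat.pow_le_pow_right (by norm_num) (by omega)
    have h4n : (2:ℚ) ^ (2 ^ n) = 2 ^ (2 ^ n - 2) * 4 := by
      have he : 2 ^ n - 2 + 2 = 2 ^ n := by omega
      calc (2:ℚ) ^ (2 ^ n) = 2 ^ (2 ^ n - 2 + 2) := by rw [he]
        _ = 2 ^ (2 ^ n - 2) * 2 ^ 2 := pow_add 2 _ 2
        _ = 2 ^ (2 ^ n - 2) * 4 := by norm_num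
    set A : ℤ := E j ^ 2 + Mμ * 2 ^ (2 ^ n - 2) with hA
    have hqA : (q * 2 ^ (2 ^ j)) ^ 2 = ((A : ℤ) : ℚ) := by
      have hμ4 : μ = ((Mμ : ℤ) : ℚ) / 4 := by rw [hMμ]; ring
      rw [mul_pow, hqdj, hcast j, hA, hμ4]
      push_cast
      rw [div_pow, hPP]
      field_simp
      rw [h4n]
      ring
    obtain ⟨u, hu⟩ := sq_rat_int _ _ hqA
    have huz : u ^ 2 = A := by
      have h5 : ((u : ℤ) : ℚ) ^ 2 = ((A : ℤ) : ℚ) := by rw [hu, hqA]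
      exact_mod_cast h5
    have hEjodd : Odd (E j) := hEodd j (le_trans one_le_two hj2)
    have hexp1 : 2 ^ n - 2 ≠ 0 := by have := hexp2; omega
    obtain ⟨c, hc⟩ := Nat.exists_eq_succ_of_ne_zero hexp1
    have hMev : Even (Mμ * 2 ^ (2 ^ n - 2)) := by
      refine ⟨Mμ * 2 ^ c, ?_⟩
      rw [hc, pow_succ]
      ring
    have huodd : Odd u := by
      rcases Int.even_or_odd u with he | ho
      · exfalso
        have h1 : Even (u ^ 2) := by
          obtain ⟨s, hs⟩ := he
          exact ⟨s * u, by rw [hs]; ring⟩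
        have h3 : Odd (u ^ 2) := by
          rw [huz, hA]
          exact hEjodd.pow.add_even hMev
        exact (Int.not_odd_iff_even.mpr h1) h3
      · exact ho
    have hMμne : Mμ ≠ 0 := by
      intro h0
      rw [h0] at hMμodd
      exact (Int.not_odd_iff_even.mpr Even.zero) hMμodd
    have hne : u ^ 2 ≠ E j ^ 2 := by
      intro hcontra
      have h9 : Mμ * 2 ^ (2 ^ n - 2) = 0 := by
        have h10 := huz
        rw [hA] at h10
        omega
      rcases mul_eq_zero.mp h9 with h | h
      · exact hMμne h
      · exact (pow_ne_zero _ (by norm_num : (2:ℤ) ≠ 0)) h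
    have hgap := odd_sq_gap u (E j) huodd hEjodd hne
    have hdiff : u ^ 2 - E j ^ 2 = Mμ * 2 ^ (2 ^ n - 2) := by
      rw [huz, hA]; ring
    rw [hdiff] at hgap
    have hgapabs : |Mμ * 2 ^ (2 ^ n - 2)| = |Mμ| * 2 ^ (2 ^ n - 2) := by
      rw [abs_mul, abs_pow]
      norm_num
    rw [hgapabs] at hgap
    -- cast to ℚ
    have hgapQ : 2 * |((E j : ℤ) : ℚ)| + 2 ≤ |((Mμ : ℤ) : ℚ)| * 2 ^ (2 ^ n - 2) := by
      exact_mod_cast hgap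
    -- lower bound for |E j|
    have hgrow := growB m hm9 d hd0 hds j hj2
    set W : ℚ := (m ^ 2 - |m|) / 16 with hWdef
    have hEd : ((E j : ℤ) : ℚ) = d j * 2 ^ (2 ^ j) := by
      rw [hcast j]
      field_simp
    have hEabs : |((E j : ℤ) : ℚ)| = |d j| * 2 ^ (2 ^ j) := by
      rw [hEd, abs_mul, abs_pow]
      norm_num
    have hElow : W * 2 ^ (2 ^ n) ≤ |((E j : ℤ) : ℚ)| := by
      rw [hEabs]
      calc W * 2 ^ (2 ^ n) = (W * 2 ^ (2 ^ j)) * 2 ^ (2 ^ j) := by rw [← hPP]; ring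
        _ ≤ |d j| * 2 ^ (2 ^ j) := mul_le_mul_of_nonneg_right hgrow (le_of_lt hP)
    have hμabs : |μ| ≤ |γ| + |m| := by rw [hμ]; exact abs_add_le _ _
    have hMμabs : |((Mμ : ℤ) : ℚ)| = 4 * |μ| := by
      rw [hMμ, abs_mul]
      norm_num
    have hPn2 : (0:ℚ) < 2 ^ (2 ^ n - 2) := by positivity
    have hfinal : 8 * W * 2 ^ (2 ^ n - 2) < |((Mμ : ℤ) : ℚ)| * 2 ^ (2 ^ n - 2) := by
      calc 8 * W * 2 ^ (2 ^ n - 2) = 2 * (W * 2 ^ (2 ^ n)) := by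
            rw [h4n]; ring
        _ ≤ 2 * |((E j : ℤ) : ℚ)| := by linarith
        _ < 2 * |((E j : ℤ) : ℚ)| + 2 := by linarith
        _ ≤ |((Mμ : ℤ) : ℚ)| * 2 ^ (2 ^ n - 2) := hgapQ
    have h8W : 8 * W < |((Mμ : ℤ) : ℚ)| :=
      lt_of_mul_lt_mul_right hfinal (le_of_lt hPn2)
    rw [hMμabs] at h8W
    have hW16 : 16 * W = m ^ 2 - |m| := by rw [hWdef]; ring
    exact final_contra γ m μ W hμabs h8W hW16 (final_ineq γ m hm9 hsqB)
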